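/- Let k ≥ 1 be an integer, α > 0 and δ > 0. Let g : ℝ → ℝ vanish on (−∞,0), be continuous, satisfy g(t)/t^α → 1 as t ↓ 0, be k-times continuously differentiable on (0,∞) with |g^{(k)}(t)| ≤ C₀ t^{α−k} for all t ∈ (0,δ), and with |g^{(k)}| decreasing on (δ,∞). For n ∈ ℕ and i ≥ k define g_{i,n}(s) := ∑_{j=0}^k (−1)^j binom(k,j) g((i−j)/n − s). Then there exists a constant C > 0 such that for all n and i ≥ k: (a) |g_{i,n}(s)| ≤ C (i/n − s)^α for s ∈ [(i−k−1)/n, i/n]; (b) |g_{i,n}(s)| ≤ C n^{−k} ((i−k)/n − s)^{α−k} for s ∈ (i/n − δ, (i−k−1)/n); (c) |g_{i,n}(s)| ≤ C n^{−k} ( 1_{[(i−k)/n−δ, i/n−δ]}(s) + |g^{(k)}((i−k)/n − s)| 1_{(−∞,(i−k)/n−δ)}(s) ) for s ∈ (−∞, i/n − δ]. -/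

import Mathlib

open MeasureTheory Filter Set Topology

/-- The kernel of the `k`-th order increment of the moving average:
`g_{i,n}(s) = ∑_{j=0}^k (−1)^j (k choose j) g((i−j)/n − s)`. -/
noncomputable def ginKernel (g : ℝ → ℝ) (k n i : ℕ) (s : ℝ) : ℝ :=
  ∑ j ∈ Finset.range (k + 1), (-1 : ℝ) ^ j * (k.choose j : ℝ) *
    g (((i : ℝ) - (j : ℝ)) / (n : ℝ) - s)

open fwdDiff in
lemma ginKernel_eq_fwdDiff (g : ℝ → ℝ) (k n i : ℕ) (s : ℝ) :
    ginKernel g k n i s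
      = (fwdDiff ((n : ℝ)⁻¹))^[k] g (((i : ℝ) - (k : ℝ)) / (n : ℝ) - s) := by
  rw [fwdDiff_iter_eq_sum_shift, ginKernel]
  rw [← Finset.sum_range_reflect]
  apply Finset.sum_congr rfl
  intro j hj
  have hjk : j ≤ k := by simpa [Nat.lt_succ_iff] using hj
  have h1 : k + 1 - 1 - j = k - j := by omega
  rw [h1, Nat.choose_symm hjk]
  have h2 : ((i : ℝ) - (↑(k - j) : ℝ)) / (n : ℝ) - s
      = ((i : ℝ) - (k : ℝ)) / (n : ℝ) - s + j • ((n : ℝ)⁻¹) := by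
    rw [Nat.cast_sub hjk]
    rcases Nat.eq_zero_or_pos n with hn | hn
    · subst hn; push_cast; simp
    have hn0 : (n : ℝ) ≠ 0 := by positivity
    push_cast
    field_simp
    rw [nsmul_eq_mul, one_div, mul_left_comm, mul_inv_cancel₀ hn0, mul_one]
    ring
  rw [h2, zsmul_eq_mul]
  push_cast
  ring

lemma iteratedDerivWithin_isOpen' {s : Set ℝ} (hs : IsOpen s) {x : ℝ} (hx : x ∈ s)
    (n : ℕ) (f : ℝ → ℝ) : iteratedDerivWithin n f s x = iteratedDeriv n f x := by
  simp [iteratedDerivWithin, iteratedDeriv, iteratedFDerivWithin_of_isOpen n hs hx]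

lemma fd_bound (m : ℕ) : ∀ g : ℝ → ℝ, ContDiffOn ℝ (m : ℕ∞) g (Ioi 0) →
    ∀ x : ℝ, 0 < x → ∀ h : ℝ, 0 < h → ∀ M : ℝ,
    (∀ t ∈ Icc x (x + m * h), |iteratedDeriv m g t| ≤ M) →
    |(fwdDiff h)^[m] g x| ≤ h ^ m * M := by
  induction m with
  | zero =>
    intro g hg x hx h hh M hM
    simpa using hM x (by simp)
  | succ m IH =>
    intro g hg x hx h hh M hM
    have hg' : ContDiffOn ℝ (m : ℕ∞) g (Ioi 0) := hg.of_le (by exact_mod_cast Nat.le_succ m)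
    have hshift : ContDiffOn ℝ (m : ℕ∞) (fun y => g (y + h)) (Ioi 0) := by
      apply ContDiffOn.comp (t := Ioi (0:ℝ)) hg'
        ((contDiff_id.add contDiff_const).contDiffOn)
      intro y hy
      simp only [mem_Ioi, id_eq] at hy ⊢
      linarith
    have hφ : ContDiffOn ℝ (m : ℕ∞) (fwdDiff h g) (Ioi 0) := by
      have : fwdDiff h g = (fun y => g (y + h)) - g := rfl
      rw [this]; exact hshift.sub hg'
    rw [Function.iterate_succ_apply]
    have key : |(fwdDiff h)^[m] (fwdDiff h g) x| ≤ h ^ m * (M * h) := by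
      apply IH _ hφ x hx h hh
      intro t ht
      obtain ⟨ht1, ht2⟩ := ht
      have ht0 : (0:ℝ) < t := lt_of_lt_of_le hx ht1
      have hrw : iteratedDeriv m (fwdDiff h g) t
          = iteratedDeriv m g (t + h) - iteratedDeriv m g t := by
        rw [← iteratedDerivWithin_isOpen' isOpen_Ioi ht0 m]
        have : fwdDiff h g = (fun y => g (y + h)) - g := rfl
        rw [this, iteratedDerivWithin_sub (show t ∈ Ioi 0 from ht0) (uniqueDiffOn_Ioi 0)
            (hshift t ht0) (hg' t ht0),
          iteratedDerivWithin_isOpen' isOpen_Ioi ht0, iteratedDerivWithin_isOpen' isOpen_Ioi ht0,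
          iteratedDeriv_comp_add_const]
      rw [hrw]
      have hG : ∀ u ∈ Icc t (t + h), HasDerivWithinAt (iteratedDeriv m g)
          (iteratedDeriv (m+1) g u) (Icc t (t + h)) u := by
        intro u hu
        have hu0 : (0:ℝ) < u := lt_of_lt_of_le ht0 hu.1
        have hmem : Ioi (0:ℝ) ∈ 𝓝 u := isOpen_Ioi.mem_nhds hu0
        have hDW : DifferentiableWithinAt ℝ (iteratedDerivWithin m g (Ioi 0)) (Ioi 0) u :=
          hg.differentiableOn_iteratedDerivWithin (by exact_mod_cast Nat.lt_succ_self m)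
            (uniqueDiffOn_Ioi 0) u hu0
        have hDA : DifferentiableAt ℝ (iteratedDerivWithin m g (Ioi 0)) u :=
          hDW.differentiableAt hmem
        have heq : iteratedDerivWithin m g (Ioi 0) =ᶠ[𝓝 u] iteratedDeriv m g :=
          Filter.eventuallyEq_of_mem hmem
            (fun y hy => iteratedDerivWithin_isOpen' isOpen_Ioi hy m g)
        have hDA2 : DifferentiableAt ℝ (iteratedDeriv m g) u :=
          hDA.congr_of_eventuallyEq heq.symm
        have : HasDerivAt (iteratedDeriv m g) (iteratedDeriv (m+1) g u) u := by
          rw [iteratedDeriv_succ]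
          exact hDA2.hasDerivAt
        exact this.hasDerivWithinAt
      have bound : ∀ u ∈ Ico t (t + h), ‖iteratedDeriv (m+1) g u‖ ≤ M := by
        intro u hu
        rw [Real.norm_eq_abs]
        apply hM
        constructor
        · linarith [hu.1]
        · push_cast; nlinarith [hu.2.le]
      have := norm_image_sub_le_of_norm_deriv_le_segment' hG bound (t + h)
        (right_mem_Icc.2 (by linarith))
      rw [Real.norm_eq_abs] at this
      calc |iteratedDeriv m g (t + h) - iteratedDeriv m g t| ≤ M * ((t + h) - t) := this
        _ = M * h := by ring
    calc |(fwdDiff h)^[m] (fwdDiff h g) x| ≤ h ^ m * (M * h) := key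
      _ = h ^ (m+1) * M := by ring

lemma ker_abs_le (g : ℝ → ℝ) (k n i : ℕ) (s : ℝ) (D : ℝ)
    (hD : ∀ j ∈ Finset.range (k+1), |g (((i:ℝ) - (j:ℝ)) / (n:ℝ) - s)| ≤ D) :
    |ginKernel g k n i s| ≤ 2 ^ k * D := by
  calc |ginKernel g k n i s|
      ≤ ∑ j ∈ Finset.range (k+1),
        |(-1 : ℝ) ^ j * (k.choose j : ℝ) * g (((i:ℝ) - (j:ℝ)) / (n:ℝ) - s)| :=
        Finset.abs_sum_le_sum_abs _ _
    _ ≤ ∑ j ∈ Finset.range (k+1), (k.choose j : ℝ) * D := by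
        apply Finset.sum_le_sum
        intro j hj
        rw [abs_mul, abs_mul, abs_pow, abs_neg, abs_one, one_pow, one_mul,
          abs_of_nonneg (by positivity : (0:ℝ) ≤ (k.choose j : ℝ))]
        exact mul_le_mul_of_nonneg_left (hD j hj) (by positivity)
    _ = 2 ^ k * D := by
        rw [← Finset.sum_mul]
        congr 1
        norm_cast
        exact Nat.sum_range_choose k

set_option maxHeartbeats 1000000 in
theorem statement6
    {k : ℕ} (hk : 1 ≤ k) {α δ C₀ : ℝ} (hα : 0 < α) (hδ : 0 < δ)
    (g : ℝ → ℝ)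
    (hg0 : ∀ t < (0 : ℝ), g t = 0)
    (hgc : Continuous g)
    (hgα : Tendsto (fun t => g t / t ^ α) (𝓝[>] (0 : ℝ)) (nhds 1))
    (hgk : ContDiffOn ℝ (k : ℕ∞) g (Set.Ioi (0 : ℝ)))
    (hgkb : ∀ t ∈ Set.Ioo (0 : ℝ) δ,
      |iteratedDerivWithin k g (Set.Ioi (0 : ℝ)) t| ≤ C₀ * t ^ (α - (k : ℝ)))
    (hdec : AntitoneOn (fun t => |iteratedDerivWithin k g (Set.Ioi (0 : ℝ)) t|)
      (Set.Ioi δ)) :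
    ∃ C > (0 : ℝ), ∀ n : ℕ, 1 ≤ n → ∀ i : ℕ, k ≤ i →
      (∀ s ∈ Set.Icc (((i : ℝ) - (k : ℝ) - 1) / (n : ℝ)) ((i : ℝ) / (n : ℝ)),
        |ginKernel g k n i s| ≤ C * ((i : ℝ) / (n : ℝ) - s) ^ α) ∧
      (∀ s ∈ Set.Ioo ((i : ℝ) / (n : ℝ) - δ) (((i : ℝ) - (k : ℝ) - 1) / (n : ℝ)),
        |ginKernel g k n i s| ≤
          C * ((n : ℝ) ^ k)⁻¹ * (((i : ℝ) - (k : ℝ)) / (n : ℝ) - s) ^ (α - (k : ℝ))) ∧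
      (∀ s : ℝ, s ≤ (i : ℝ) / (n : ℝ) - δ →
        |ginKernel g k n i s| ≤
          C * ((n : ℝ) ^ k)⁻¹ *
            ((if ((i : ℝ) - (k : ℝ)) / (n : ℝ) - δ ≤ s ∧ s ≤ (i : ℝ) / (n : ℝ) - δ
                then (1 : ℝ) else 0) +
              |iteratedDerivWithin k g (Set.Ioi (0 : ℝ)) (((i : ℝ) - (k : ℝ)) / (n : ℝ) - s)| *
                (if s < ((i : ℝ) - (k : ℝ)) / (n : ℝ) - δ then (1 : ℝ) else 0))) := by
  -- `g 0 = 0`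
  have hg00 : g 0 = 0 := by
    have h1 : Tendsto g (𝓝[>] (0:ℝ)) (𝓝 (g 0)) := (hgc.tendsto 0).mono_left nhdsWithin_le_nhds
    have h2 : Tendsto (fun t : ℝ => t ^ α) (𝓝[>] (0:ℝ)) (𝓝 0) := by
      have hc : ContinuousAt (fun t : ℝ => t ^ α) 0 :=
        Real.continuousAt_rpow_const 0 α (Or.inr hα.le)
      have := hc.tendsto.mono_left (nhdsWithin_le_nhds (s := Ioi (0:ℝ)))
      simpa [Real.zero_rpow hα.ne'] using this
    have h3 : Tendsto (fun t => (g t / t ^ α) * t ^ α) (𝓝[>] (0:ℝ)) (𝓝 0) := by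
      simpa using hgα.mul h2
    have h4 : Tendsto g (𝓝[>] (0:ℝ)) (𝓝 0) := by
      apply h3.congr'
      filter_upwards [self_mem_nhdsWithin] with t ht
      rw [div_mul_cancel₀ _ (Real.rpow_pos_of_pos ht α).ne']
    exact tendsto_nhds_unique h1 h4
  have hgle : ∀ t : ℝ, t ≤ 0 → g t = 0 := by
    intro t ht
    rcases lt_or_eq_of_le ht with h | h
    · exact hg0 t h
    · rw [h, hg00]
  -- small-`t` bound for `g`
  obtain ⟨ε, hε0, hεsub⟩ : ∃ ε > (0:ℝ), ∀ t ∈ Ioo (0:ℝ) ε, |g t| ≤ 2 * t ^ α := by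
    have hsmall : ∀ᶠ t in 𝓝[>] (0:ℝ), |g t| ≤ 2 * t ^ α := by
      have h1 : Tendsto (fun t => |g t / t ^ α|) (𝓝[>] (0:ℝ)) (𝓝 |1|) := hgα.abs
      have h2 : ∀ᶠ t in 𝓝[>] (0:ℝ), |g t / t ^ α| < 2 :=
        h1.eventually_lt_const (by norm_num)
      filter_upwards [h2, self_mem_nhdsWithin] with t h2t ht
      have htα : (0:ℝ) < t ^ α := Real.rpow_pos_of_pos ht α
      rw [abs_div, abs_of_pos htα, div_lt_iff₀ htα] at h2t
      linarith
    obtain ⟨u, hu, hsub⟩ := mem_nhdsGT_iff_exists_Ioo_subset.1 hsmall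
    exact ⟨u, hu, fun t ht => hsub ht⟩
  -- the constant `C1` for the bound `|g t| ≤ C1 (max t 0)^α` on `(-∞, k+1]`
  obtain ⟨C1, hC1two, hL1⟩ : ∃ C1 : ℝ, 2 ≤ C1 ∧
      ∀ t : ℝ, t ≤ (k:ℝ) + 1 → |g t| ≤ C1 * (max t 0) ^ α := by
    obtain ⟨B₁, hB₁⟩ := (isCompact_Icc (a := ε/2) (b := (k:ℝ)+1)).exists_bound_of_continuousOn
      hgc.continuousOn
    have hε2 : (0:ℝ) < (ε/2) ^ α := Real.rpow_pos_of_pos (by linarith) α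
    refine ⟨2 + max B₁ 0 / (ε/2) ^ α, by
      have : (0:ℝ) ≤ max B₁ 0 / (ε/2) ^ α := by positivity
      linarith, ?_⟩
    intro t ht
    rcases le_or_gt t 0 with ht0 | ht0
    · rw [hgle t ht0, max_eq_right ht0, abs_zero, Real.zero_rpow hα.ne', mul_zero]
    rw [max_eq_left ht0.le]
    have htα : (0:ℝ) ≤ t ^ α := (Real.rpow_pos_of_pos ht0 α).le
    rcases lt_or_ge t (ε/2) with htε | htε
    · have := hεsub t ⟨ht0, by linarith⟩
      have h2 : 2 * t ^ α ≤ (2 + max B₁ 0 / (ε/2) ^ α) * t ^ α := by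
        apply mul_le_mul_of_nonneg_right _ htα
        have : (0:ℝ) ≤ max B₁ 0 / (ε/2) ^ α := by positivity
        linarith
      linarith
    · have h1 : |g t| ≤ max B₁ 0 := le_trans (by simpa using hB₁ t ⟨htε, ht⟩) (le_max_left _ _)
      have h2 : (ε/2) ^ α ≤ t ^ α := Real.rpow_le_rpow (by linarith) htε hα.le
      have h3 : max B₁ 0 ≤ (max B₁ 0 / (ε/2) ^ α) * t ^ α := by
        rw [div_mul_eq_mul_div, le_div_iff₀ hε2]
        exact mul_le_mul_of_nonneg_left h2 (le_max_right _ _)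
      have h4 : (max B₁ 0 / (ε/2) ^ α) * t ^ α ≤ (2 + max B₁ 0 / (ε/2) ^ α) * t ^ α := by
        nlinarith
      linarith
  -- global bound `B` for `|g|` on `(-∞, δ + k]`
  obtain ⟨B, hB0, hB⟩ : ∃ B ≥ (0:ℝ), ∀ t : ℝ, t ≤ δ + (k:ℝ) → |g t| ≤ B := by
    obtain ⟨B₂, hB₂⟩ := (isCompact_Icc (a := (0:ℝ)) (b := δ + (k:ℝ))).exists_bound_of_continuousOn
      hgc.continuousOn
    refine ⟨max B₂ 0, le_max_right _ _, ?_⟩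
    intro t ht
    rcases le_or_gt t 0 with ht0 | ht0
    · rw [hgle t ht0, abs_zero]; exact le_max_right _ _
    · exact le_trans (by simpa using hB₂ t ⟨ht0.le, ht⟩) (le_max_left _ _)
  -- `C₀ ≥ 0`
  have hC₀ : 0 ≤ C₀ := by
    have h1 := hgkb (δ/2) ⟨by linarith, by linarith⟩
    have h2 : (0:ℝ) < (δ/2) ^ (α - (k:ℝ)) := Real.rpow_pos_of_pos (by linarith) _
    nlinarith [abs_nonneg (iteratedDerivWithin k g (Set.Ioi (0:ℝ)) (δ/2))]
  set Kf : ℝ := max (((k:ℝ)+1) ^ (α - (k:ℝ))) 1 with hKf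
  have hKf1 : (1:ℝ) ≤ Kf := le_max_right _ _
  -- bound `M₁` for the k-th derivative on `[δ/2, ∞)`
  have hcont : ContinuousOn (iteratedDerivWithin k g (Set.Ioi (0:ℝ))) (Set.Ioi (0:ℝ)) :=
    hgk.continuousOn_iteratedDerivWithin le_rfl (uniqueDiffOn_Ioi 0)
  obtain ⟨M₁, hM₁0, hM₁⟩ : ∃ M₁ ≥ (0:ℝ), ∀ t : ℝ, δ/2 ≤ t →
      |iteratedDerivWithin k g (Set.Ioi (0:ℝ)) t| ≤ M₁ := by
    obtain ⟨M₀, hM₀⟩ := (isCompact_Icc (a := δ/2) (b := δ)).exists_bound_of_continuousOn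
      (hcont.mono (fun t ht => lt_of_lt_of_le (by linarith) ht.1))
    have hM₀' : ∀ t ∈ Icc (δ/2) δ, |iteratedDerivWithin k g (Set.Ioi (0:ℝ)) t| ≤ max M₀ 0 :=
      fun t ht => le_trans (by simpa using hM₀ t ht) (le_max_left _ _)
    refine ⟨max M₀ 0, le_max_right _ _, ?_⟩
    intro t ht
    rcases le_or_gt t δ with htδ | htδ
    · exact hM₀' t ⟨ht, htδ⟩
    · have htend : Tendsto (fun u => |iteratedDerivWithin k g (Set.Ioi (0:ℝ)) u|) (𝓝[>] δ)
          (𝓝 |iteratedDerivWithin k g (Set.Ioi (0:ℝ)) δ|) := by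
        have h1 : ContinuousWithinAt (iteratedDerivWithin k g (Set.Ioi (0:ℝ)))
            (Set.Ioi (0:ℝ)) δ := hcont δ hδ
        exact (h1.tendsto.mono_left (nhdsWithin_mono δ (Ioi_subset_Ioi hδ.le))).abs
      have hev : ∀ᶠ u in 𝓝[>] δ, |iteratedDerivWithin k g (Set.Ioi (0:ℝ)) t|
          ≤ |iteratedDerivWithin k g (Set.Ioi (0:ℝ)) u| := by
        filter_upwards [Ioo_mem_nhdsGT_of_mem (⟨le_refl δ, htδ⟩ : δ ∈ Ico δ t)] with u hu
        exact hdec hu.1 (show t ∈ Ioi δ from htδ) hu.2.le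
      exact le_trans (ge_of_tendsto htend hev) (hM₀' δ ⟨by linarith, le_refl δ⟩)
  -- the final constant
  set C : ℝ := 2^k * C1 + C₀ * Kf + 1 + M₁ + 2^k * B * ((2*(k:ℝ))/δ)^k with hCdef
  have hk1 : (1:ℝ) ≤ (k:ℝ) := by exact_mod_cast hk
  have hCpos : 0 < C := by
    have h1 : (0:ℝ) ≤ 2^k * C1 := by positivity
    have h2 : (0:ℝ) ≤ C₀ * Kf := mul_nonneg hC₀ (by linarith)
    have h3 : (0:ℝ) ≤ 2^k * B * ((2*(k:ℝ))/δ)^k := by positivity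
    simp only [hCdef]; linarith
  refine ⟨C, hCpos, ?_⟩
  intro n hn i hi
  have hn0 : (0:ℝ) < (n:ℝ) := by exact_mod_cast hn
  have hh : (0:ℝ) < ((n:ℝ))⁻¹ := by positivity
  have hn1 : ((n:ℝ))⁻¹ ≤ 1 := by
    rw [inv_le_one_iff₀]; right; exact_mod_cast hn
  have hik : (k:ℝ) ≤ (i:ℝ) := by exact_mod_cast hi
  have e1 : ((i:ℝ) - (k:ℝ)) / (n:ℝ) = (i:ℝ)/(n:ℝ) - (k:ℝ) * ((n:ℝ))⁻¹ := by
    rw [div_eq_mul_inv, div_eq_mul_inv]; ring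
  have e2 : ((i:ℝ) - (k:ℝ) - 1) / (n:ℝ) = (i:ℝ)/(n:ℝ) - (k:ℝ) * ((n:ℝ))⁻¹ - ((n:ℝ))⁻¹ := by
    rw [div_eq_mul_inv, div_eq_mul_inv]; ring
  have hinvpow : (((n:ℝ))⁻¹) ^ k = (((n:ℝ)) ^ k)⁻¹ := inv_pow _ _
  have hinvk0 : (0:ℝ) ≤ (((n:ℝ)) ^ k)⁻¹ := by positivity
  refine ⟨?_, ?_, ?_⟩
  · -- part (a)
    intro s hs
    obtain ⟨hs1, hs2⟩ := hs
    have hR : (0:ℝ) ≤ (i:ℝ)/(n:ℝ) - s := by linarith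
    have hRα : (0:ℝ) ≤ ((i:ℝ)/(n:ℝ) - s) ^ α := Real.rpow_nonneg hR α
    have key : |ginKernel g k n i s| ≤ 2^k * (C1 * ((i:ℝ)/(n:ℝ) - s) ^ α) := by
      apply ker_abs_le
      intro j hj
      have hj' : (j:ℝ) ≤ (k:ℝ) := by
        have : j ≤ k := by simpa [Nat.lt_succ_iff] using hj
        exact_mod_cast this
      have hj0 : (0:ℝ) ≤ (j:ℝ) := by positivity
      have ht1 : ((i:ℝ) - (j:ℝ)) / (n:ℝ) - s ≤ (i:ℝ)/(n:ℝ) - s := by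
        have : ((i:ℝ) - (j:ℝ)) / (n:ℝ) ≤ (i:ℝ)/(n:ℝ) := by
          gcongr
          linarith
        linarith
      have ht2 : ((i:ℝ) - (j:ℝ)) / (n:ℝ) - s ≤ (k:ℝ) + 1 := by
        have h3 : ((i:ℝ) - (j:ℝ)) / (n:ℝ) - s ≤ ((i:ℝ))/(n:ℝ) - s := ht1
        have h4 : (i:ℝ)/(n:ℝ) - s ≤ ((k:ℝ)+1) * ((n:ℝ))⁻¹ := by
          rw [e2] at hs1; linarith
        have h5 : ((k:ℝ)+1) * ((n:ℝ))⁻¹ ≤ ((k:ℝ)+1) * 1 :=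
          mul_le_mul_of_nonneg_left hn1 (by positivity)
        linarith
      calc |g (((i:ℝ) - (j:ℝ)) / (n:ℝ) - s)|
          ≤ C1 * (max (((i:ℝ) - (j:ℝ)) / (n:ℝ) - s) 0) ^ α := hL1 _ ht2
        _ ≤ C1 * ((i:ℝ)/(n:ℝ) - s) ^ α := by
            apply mul_le_mul_of_nonneg_left _ (by linarith)
            apply Real.rpow_le_rpow (le_max_right _ _) _ hα.le
            exact max_le ht1 hR
    calc |ginKernel g k n i s| ≤ 2^k * (C1 * ((i:ℝ)/(n:ℝ) - s) ^ α) := key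
      _ = (2^k * C1) * ((i:ℝ)/(n:ℝ) - s) ^ α := by ring
      _ ≤ C * ((i:ℝ)/(n:ℝ) - s) ^ α := by
          apply mul_le_mul_of_nonneg_right _ hRα
          have h2 : (0:ℝ) ≤ C₀ * Kf := mul_nonneg hC₀ (by linarith)
          have h3 : (0:ℝ) ≤ 2^k * B * ((2*(k:ℝ))/δ)^k := by positivity
          simp only [hCdef]; linarith
  · -- part (b)
    intro s hs
    obtain ⟨hs1, hs2⟩ := hs
    set x : ℝ := ((i:ℝ) - (k:ℝ)) / (n:ℝ) - s with hxdef
    clear_value x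
    have hx1 : ((n:ℝ))⁻¹ < x := by
      rw [hxdef, e1]; rw [e2] at hs2; linarith
    have hx0 : (0:ℝ) < x := lt_trans hh hx1
    have hxk : x + (k:ℝ) * ((n:ℝ))⁻¹ = (i:ℝ)/(n:ℝ) - s := by rw [hxdef, e1]; ring
    have hxδ : x + (k:ℝ) * ((n:ℝ))⁻¹ < δ := by rw [hxk]; linarith
    have hxα : (0:ℝ) ≤ x ^ (α - (k:ℝ)) := (Real.rpow_pos_of_pos hx0 _).le
    have hbd := fd_bound k g hgk x hx0 ((n:ℝ))⁻¹ hh (C₀ * Kf * x ^ (α - (k:ℝ))) ?_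
    · rw [ginKernel_eq_fwdDiff, ← hxdef]
      calc |(fwdDiff ((n:ℝ))⁻¹)^[k] g x| ≤ (((n:ℝ))⁻¹)^k * (C₀ * Kf * x ^ (α - (k:ℝ))) := hbd
        _ = (C₀ * Kf) * ((((n:ℝ))^k)⁻¹ * x ^ (α - (k:ℝ))) := by rw [hinvpow]; ring
        _ ≤ C * ((((n:ℝ))^k)⁻¹ * x ^ (α - (k:ℝ))) := by
            apply mul_le_mul_of_nonneg_right _ (by positivity)
            have h1 : (0:ℝ) ≤ 2^k * C1 := by positivity
            have h3 : (0:ℝ) ≤ 2^k * B * ((2*(k:ℝ))/δ)^k := by positivity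
            simp only [hCdef]; linarith
        _ = C * (((n:ℝ))^k)⁻¹ * x ^ (α - (k:ℝ)) := by ring
    · intro t ht
      obtain ⟨ht1, ht2⟩ := ht
      have ht0 : (0:ℝ) < t := lt_of_lt_of_le hx0 ht1
      have htδ : t < δ := by linarith
      rw [← iteratedDerivWithin_isOpen' isOpen_Ioi ht0]
      have h1 := hgkb t ⟨ht0, htδ⟩
      have h2 : t ^ (α - (k:ℝ)) ≤ Kf * x ^ (α - (k:ℝ)) := by
        rcases le_or_gt (k:ℝ) α with hαk | hαk
        · have h3 : t ^ (α - (k:ℝ)) ≤ (((k:ℝ)+1) * x) ^ (α - (k:ℝ)) := by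
            refine Real.rpow_le_rpow ht0.le ?_ (by linarith)
            have hkx : (k:ℝ) * ((n:ℝ))⁻¹ ≤ (k:ℝ) * x :=
              mul_le_mul_of_nonneg_left hx1.le (by positivity)
            calc t ≤ x + (k:ℝ) * x := by linarith
              _ = ((k:ℝ)+1) * x := by ring
          have h4 : (((k:ℝ)+1) * x) ^ (α - (k:ℝ))
              = ((k:ℝ)+1) ^ (α - (k:ℝ)) * x ^ (α - (k:ℝ)) :=
            Real.mul_rpow (by positivity) hx0.le
          have h5 : ((k:ℝ)+1) ^ (α - (k:ℝ)) ≤ Kf := le_max_left _ _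
          calc t ^ (α - (k:ℝ)) ≤ ((k:ℝ)+1) ^ (α - (k:ℝ)) * x ^ (α - (k:ℝ)) := by
                rw [← h4]; exact h3
            _ ≤ Kf * x ^ (α - (k:ℝ)) := mul_le_mul_of_nonneg_right h5 hxα
        · have h3 : t ^ (α - (k:ℝ)) ≤ x ^ (α - (k:ℝ)) :=
            Real.rpow_le_rpow_of_nonpos hx0 ht1 (by linarith)
          have h6 := mul_le_mul_of_nonneg_right hKf1 hxα
          linarith
      calc |iteratedDerivWithin k g (Set.Ioi (0:ℝ)) t| ≤ C₀ * t ^ (α - (k:ℝ)) := h1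
        _ ≤ C₀ * (Kf * x ^ (α - (k:ℝ))) := mul_le_mul_of_nonneg_left h2 hC₀
        _ = C₀ * Kf * x ^ (α - (k:ℝ)) := by ring
  · -- part (c)
    intro s hs
    set x : ℝ := ((i:ℝ) - (k:ℝ)) / (n:ℝ) - s with hxdef
    clear_value x
    have hxk : x + (k:ℝ) * ((n:ℝ))⁻¹ = (i:ℝ)/(n:ℝ) - s := by rw [hxdef, e1]; ring
    by_cases hcase : s < ((i:ℝ) - (k:ℝ)) / (n:ℝ) - δ
    · -- outer region: `x > δ`
      have hxδ : δ < x := by rw [hxdef]; linarith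
      rw [if_neg (fun hcon => absurd hcase (not_lt.2 hcon.1)), if_pos hcase, zero_add, mul_one]
      rw [ginKernel_eq_fwdDiff, ← hxdef]
      have hbd := fd_bound k g hgk x (lt_trans hδ hxδ) ((n:ℝ))⁻¹ hh
        (|iteratedDerivWithin k g (Set.Ioi (0:ℝ)) x|) ?_
      · have h1 : (1:ℝ) ≤ C := by
          have h2 : (0:ℝ) ≤ 2^k * C1 := by positivity
          have h3 : (0:ℝ) ≤ C₀ * Kf := mul_nonneg hC₀ (by linarith)
          have h4 : (0:ℝ) ≤ 2^k * B * ((2*(k:ℝ))/δ)^k := by positivity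
          simp only [hCdef]; linarith
        calc |(fwdDiff ((n:ℝ))⁻¹)^[k] g x|
            ≤ (((n:ℝ))⁻¹)^k * |iteratedDerivWithin k g (Set.Ioi (0:ℝ)) x| := hbd
          _ = (((n:ℝ))^k)⁻¹ * |iteratedDerivWithin k g (Set.Ioi (0:ℝ)) x| := by rw [hinvpow]
          _ ≤ C * ((((n:ℝ))^k)⁻¹ * |iteratedDerivWithin k g (Set.Ioi (0:ℝ)) x|) :=
              le_mul_of_one_le_left (by positivity) h1
          _ = C * (((n:ℝ))^k)⁻¹ * |iteratedDerivWithin k g (Set.Ioi (0:ℝ)) x| := by ring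
      · intro t ht
        have ht0 : (0:ℝ) < t := lt_trans hδ (lt_of_lt_of_le hxδ ht.1)
        rw [← iteratedDerivWithin_isOpen' isOpen_Ioi ht0]
        exact hdec (show x ∈ Ioi δ from hxδ)
          (show t ∈ Ioi δ from lt_of_lt_of_le hxδ ht.1) ht.1
    · -- middle region: `δ - k/n ≤ x ≤ δ`
      push_neg at hcase
      have hxle : x ≤ δ := by rw [hxdef]; linarith
      rw [if_pos ⟨hcase, hs⟩, if_neg (not_lt.2 hcase), mul_zero, add_zero, mul_one]
      by_cases hbig : (k:ℝ) * ((n:ℝ))⁻¹ ≤ δ/2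
      · have hxge : δ/2 ≤ x := by rw [hxdef, e1]; linarith
        have hx0 : (0:ℝ) < x := lt_of_lt_of_le (by linarith) hxge
        rw [ginKernel_eq_fwdDiff, ← hxdef]
        have hbd := fd_bound k g hgk x hx0 ((n:ℝ))⁻¹ hh M₁ ?_
        · have hM₁C : M₁ ≤ C := by
            have h2 : (0:ℝ) ≤ 2^k * C1 := by positivity
            have h3 : (0:ℝ) ≤ C₀ * Kf := mul_nonneg hC₀ (by linarith)
            have h4 : (0:ℝ) ≤ 2^k * B * ((2*(k:ℝ))/δ)^k := by positivity
            simp only [hCdef]; linarith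
          calc |(fwdDiff ((n:ℝ))⁻¹)^[k] g x| ≤ (((n:ℝ))⁻¹)^k * M₁ := hbd
            _ = (((n:ℝ))^k)⁻¹ * M₁ := by rw [hinvpow]
            _ ≤ (((n:ℝ))^k)⁻¹ * C := mul_le_mul_of_nonneg_left hM₁C hinvk0
            _ = C * (((n:ℝ))^k)⁻¹ := by ring
        · intro t ht
          have ht0 : (0:ℝ) < t := lt_of_lt_of_le hx0 ht.1
          rw [← iteratedDerivWithin_isOpen' isOpen_Ioi ht0]
          exact hM₁ t (le_trans hxge ht.1)
      · push_neg at hbig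
        have hk0 : (0:ℝ) < (k:ℝ) := by exact_mod_cast hk
        have hn2 : δ/(2*(k:ℝ)) < ((n:ℝ))⁻¹ := by
          rw [div_lt_iff₀ (by positivity)]
          calc δ < 2 * ((k:ℝ) * ((n:ℝ))⁻¹) := by linarith
            _ = ((n:ℝ))⁻¹ * (2 * (k:ℝ)) := by ring
        have hpow : (δ/(2*(k:ℝ)))^k ≤ (((n:ℝ))⁻¹)^k :=
          pow_le_pow_left₀ (by positivity) hn2.le k
        have hcrude : |ginKernel g k n i s| ≤ 2^k * B := by
          apply ker_abs_le
          intro j hj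
          apply hB
          have hj0 : (0:ℝ) ≤ (j:ℝ) := by positivity
          have h1 : ((i:ℝ) - (j:ℝ))/(n:ℝ) ≤ (i:ℝ)/(n:ℝ) := by
            gcongr
            linarith
          have h2 : (k:ℝ) * ((n:ℝ))⁻¹ ≤ (k:ℝ) * 1 :=
            mul_le_mul_of_nonneg_left hn1 (by positivity)
          linarith [hxk]
        have hfinal : 2^k * B ≤ C * (((n:ℝ))^k)⁻¹ := by
          have e : ((2*(k:ℝ))/δ)^k * (δ/(2*(k:ℝ)))^k = 1 := by
            rw [← mul_pow]
            have h3 : (2*(k:ℝ))/δ * (δ/(2*(k:ℝ))) = 1 := by field_simp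
            rw [h3, one_pow]
          have hC2 : 2^k * B * ((2*(k:ℝ))/δ)^k ≤ C := by
            have h2 : (0:ℝ) ≤ 2^k * C1 := by positivity
            have h3 : (0:ℝ) ≤ C₀ * Kf := mul_nonneg hC₀ (by linarith)
            simp only [hCdef]; linarith
          calc 2^k * B = (2^k * B * ((2*(k:ℝ))/δ)^k) * (δ/(2*(k:ℝ)))^k := by
                rw [mul_assoc, e, mul_one]
            _ ≤ C * (((n:ℝ))^k)⁻¹ := by
                apply mul_le_mul hC2 (le_trans hpow (le_of_eq hinvpow)) (by positivity) hCpos.le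
        linarith
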